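/- Define λ(p) := (p−1)·(π/(p·sin(π/p)))^p for p > 1. Then λ(p) − p → π²/6 − 1 as p → ∞. -/

import Mathlib

open Real Filter Topology

lemma slope_exp : Tendsto (fun h : ℝ => (Real.exp h - 1) / h) (𝓝[≠] (0:ℝ)) (𝓝 1) := by
  have := hasDerivAt_iff_tendsto_slope.mp (Real.hasDerivAt_exp 0)
  simpa [slope_fun_def, Real.exp_zero, div_eq_inv_mul] using this

lemma sin_div_lim : Tendsto (fun x : ℝ => Real.sin x / x) (𝓝[≠] (0:ℝ)) (𝓝 1) := by
  have := hasDerivAt_iff_tendsto_slope.mp (Real.hasDerivAt_sin 0)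
  simpa [slope_fun_def, Real.sin_zero, Real.cos_zero, div_eq_inv_mul] using this

lemma log_one_sub_lim : Tendsto (fun u : ℝ => Real.log (1 - u) / u) (𝓝[≠] (0:ℝ)) (𝓝 (-1)) := by
  have h1 : HasDerivAt (fun u : ℝ => (1:ℝ) - u) (-1) 0 := by
    simpa using (hasDerivAt_id (0:ℝ)).const_sub 1
  have h2 : HasDerivAt (fun u : ℝ => Real.log (1 - u)) (-1) 0 := by
    have := (Real.hasDerivAt_log (by norm_num : (1:ℝ) - 0 ≠ 0)).comp 0 h1
    simpa [Function.comp_def] using this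
  have := hasDerivAt_iff_tendsto_slope.mp h2
  simpa [slope_fun_def, div_eq_inv_mul] using this

lemma cube_lim : Tendsto (fun x : ℝ => (x - Real.sin x) / x ^ 3) (𝓝[>] (0:ℝ)) (𝓝 (1/6)) := by
  have hsq : Tendsto (fun x : ℝ => (x - Real.sin x) / x ^ 3 - 1/6) (𝓝[>] (0:ℝ)) (𝓝 0) := by
    apply squeeze_zero_norm' (a := fun x : ℝ => x * (5/96))
    · filter_upwards [Ioo_mem_nhdsGT_of_mem (by norm_num : (0:ℝ) ∈ Set.Ico 0 1)] with x hx
      obtain ⟨hx0, hx1⟩ := hx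
      have hb := Real.sin_bound (x := x) (by rw [abs_of_pos hx0]; exact hx1.le)
      have hx3 : (0:ℝ) < x ^ 3 := by positivity
      have : (x - Real.sin x) / x ^ 3 - 1/6 = -((Real.sin x - (x - x^3/6)) / x^3) := by
        field_simp; ring
      rw [this, norm_neg, norm_div, Real.norm_eq_abs, Real.norm_eq_abs, abs_of_pos hx3,
        div_le_iff₀ hx3]
      calc |Real.sin x - (x - x^3/6)| ≤ |x| ^ 4 * (5/96) := hb.trans (by
            rw [abs_of_pos hx0]; nlinarith [mul_pos (pow_pos hx0 4) (sub_pos.2 hx1), pow_pos hx0 4])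
        _ = x * (5/96) * x ^ 3 := by rw [abs_of_pos hx0]; ring
    · have h0 : Tendsto (fun x : ℝ => x * (5/96)) (𝓝 (0:ℝ)) (𝓝 (0 * (5/96))) :=
        (tendsto_id (α := ℝ)).mul_const (5/96)
      rw [zero_mul] at h0
      exact h0.mono_left nhdsWithin_le_nhds
  have := hsq.add_const (1/6)
  simpa using this

lemma log_lim : Tendsto (fun x : ℝ => Real.log (x / Real.sin x) / x ^ 2)
    (𝓝[>] (0:ℝ)) (𝓝 (1/6)) := by
  set u : ℝ → ℝ := fun x => 1 - Real.sin x / x with hu_def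
  have hmono : 𝓝[>] (0:ℝ) ≤ 𝓝[≠] (0:ℝ) :=
    nhdsWithin_mono 0 (fun x hx => ne_of_gt hx)
  have hu : Tendsto u (𝓝[>] (0:ℝ)) (𝓝[≠] (0:ℝ)) := by
    rw [tendsto_nhdsWithin_iff]
    constructor
    · have := (tendsto_const_nhds (x := (1:ℝ)) (f := 𝓝[>] (0:ℝ))).sub
        (sin_div_lim.mono_left hmono)
      simpa using this
    · filter_upwards [Ioo_mem_nhdsGT_of_mem (by norm_num : (0:ℝ) ∈ Set.Ico 0 1)] with x hx
      obtain ⟨hx0, hx1⟩ := hx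
      have : Real.sin x / x < 1 := (div_lt_one hx0).2 (Real.sin_lt hx0)
      simp only [Set.mem_compl_iff, Set.mem_singleton_iff, hu_def]
      intro h
      nlinarith
  have hfac : Tendsto (fun x : ℝ => -(Real.log (1 - u x) / u x)) (𝓝[>] (0:ℝ)) (𝓝 1) := by
    have := (log_one_sub_lim.comp hu).neg
    simpa using this
  have hprod := hfac.mul cube_lim
  rw [one_mul] at hprod
  refine Tendsto.congr' ?_ hprod
  filter_upwards [Ioo_mem_nhdsGT_of_mem (by constructor <;> [norm_num; exact Real.pi_pos] :
      (0:ℝ) ∈ Set.Ico 0 π)] with x hx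
  obtain ⟨hx0, hxπ⟩ := hx
  have hs : 0 < Real.sin x := Real.sin_pos_of_pos_of_lt_pi hx0 hxπ
  have hlt : Real.sin x < x := Real.sin_lt hx0
  have hxne : x ≠ 0 := ne_of_gt hx0
  have h1u : 1 - u x = Real.sin x / x := by simp [hu_def]
  have hune : u x ≠ 0 := by
    have : Real.sin x / x < 1 := (div_lt_one hx0).2 hlt
    simp only [hu_def]; intro h; nlinarith
  have hux : u x = (x - Real.sin x) / x := by simp [hu_def]; field_simp
  rw [h1u, hux]
  have hlog : Real.log (Real.sin x / x) = -Real.log (x / Real.sin x) := by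
    rw [← Real.log_inv, inv_div]
  rw [hlog]
  rw [hux] at hune
  have hxsne : x - Real.sin x ≠ 0 := by
    intro h; apply hune; rw [h]; simp
  field_simp

theorem lambda_sub_p_tendsto :
    Tendsto (fun p : ℝ => (p - 1) * (π / (p * Real.sin (π / p))) ^ p - p)
      atTop (nhds (π ^ 2 / 6 - 1)) := by
  have hπ := Real.pi_pos
  set g : ℝ → ℝ := fun p => Real.log ((π / p) / Real.sin (π / p)) with hg_def
  -- π / p → 0⁺
  have hx : Tendsto (fun p : ℝ => π / p) atTop (𝓝[>] (0:ℝ)) := by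
    rw [tendsto_nhdsWithin_iff]
    constructor
    · have := tendsto_inv_atTop_zero.const_mul π
      simpa [div_eq_mul_inv] using this
    · filter_upwards [eventually_gt_atTop (0:ℝ)] with p hp
      exact div_pos hπ hp
  -- basic eventual facts
  have hbasic : ∀ᶠ p : ℝ in atTop, 1 < p ∧ 0 < Real.sin (π / p) ∧ Real.sin (π / p) < π / p
      ∧ 0 < g p := by
    filter_upwards [eventually_gt_atTop (1:ℝ)] with p hp
    have hp0 : 0 < p := lt_trans one_pos hp
    have hx0 : 0 < π / p := div_pos hπ hp0
    have hxπ : π / p < π := div_lt_self hπ hp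
    have hs : 0 < Real.sin (π / p) := Real.sin_pos_of_pos_of_lt_pi hx0 hxπ
    have hlt : Real.sin (π / p) < π / p := Real.sin_lt hx0
    refine ⟨hp, hs, hlt, ?_⟩
    exact Real.log_pos ((one_lt_div hs).2 hlt)
  -- g p / (π/p)^2 → 1/6
  have hA : Tendsto (fun p : ℝ => g p / (π / p) ^ 2) atTop (𝓝 (1/6)) := log_lim.comp hx
  -- (p-1)*p*g p → π²/6
  have hB : Tendsto (fun p : ℝ => (p - 1) * p * g p) atTop (𝓝 (π ^ 2 / 6)) := by
    have hq : Tendsto (fun p : ℝ => (p - 1) / p) atTop (𝓝 1) := by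
      have h1 : Tendsto (fun p : ℝ => 1 - p⁻¹) atTop (𝓝 (1 - 0)) :=
        tendsto_const_nhds.sub tendsto_inv_atTop_zero
      rw [sub_zero] at h1
      refine Tendsto.congr' ?_ h1
      filter_upwards [eventually_gt_atTop (0:ℝ)] with p hp
      field_simp
    have := (hq.mul_const (π ^ 2)).mul hA
    rw [one_mul] at this
    have h2 : π ^ 2 * (1/6) = π ^ 2 / 6 := by ring
    rw [h2] at this
    refine Tendsto.congr' ?_ this
    filter_upwards [eventually_gt_atTop (0:ℝ)] with p hp
    have hpne : p ≠ 0 := ne_of_gt hp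
    field_simp
  -- g p * p → 0
  have hh : Tendsto (fun p : ℝ => g p * p) atTop (𝓝 0) := by
    have hinv : Tendsto (fun p : ℝ => (p - 1)⁻¹) atTop (𝓝 0) := by
      apply Tendsto.inv_tendsto_atTop
      exact tendsto_atTop_add_const_right _ (-1) tendsto_id |>.congr (fun p => by simp [sub_eq_add_neg, add_comm])
    have := hB.mul hinv
    rw [mul_zero] at this
    refine Tendsto.congr' ?_ this
    filter_upwards [eventually_gt_atTop (1:ℝ)] with p hp
    have : p - 1 ≠ 0 := by linarith
    field_simp
  have hhne : Tendsto (fun p : ℝ => g p * p) atTop (𝓝[≠] (0:ℝ)) := by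
    rw [tendsto_nhdsWithin_iff]
    refine ⟨hh, ?_⟩
    filter_upwards [hbasic] with p ⟨hp, _, _, hgp⟩
    have : 0 < g p * p := mul_pos hgp (lt_trans one_pos hp)
    simp only [Set.mem_compl_iff, Set.mem_singleton_iff]
    exact ne_of_gt this
  have hexp : Tendsto (fun p : ℝ => (Real.exp (g p * p) - 1) / (g p * p)) atTop (𝓝 1) :=
    slope_exp.comp hhne
  -- (p-1) * (exp (g p * p) - 1) → π²/6
  have hE : Tendsto (fun p : ℝ => (p - 1) * (Real.exp (g p * p) - 1)) atTop (𝓝 (π ^ 2 / 6)) := by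
    have := hB.mul hexp
    rw [mul_one] at this
    refine Tendsto.congr' ?_ this
    filter_upwards [hbasic] with p ⟨hp, _, _, hgp⟩
    have hne : g p * p ≠ 0 := ne_of_gt (mul_pos hgp (lt_trans one_pos hp))
    field_simp
  have hfinal := hE.sub_const 1
  refine Tendsto.congr' ?_ hfinal
  filter_upwards [hbasic] with p ⟨hp, hs, hlt, hgp⟩
  have hp0 : 0 < p := lt_trans one_pos hp
  have hbase : 0 < π / (p * Real.sin (π / p)) := div_pos hπ (mul_pos hp0 hs)
  have hrw : π / (p * Real.sin (π / p)) = (π / p) / Real.sin (π / p) := (div_div _ _ _).symm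
  rw [Real.rpow_def_of_pos hbase, hrw,
    show Real.log (π / p / Real.sin (π / p)) = g p from rfl]
  ring
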